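/- arXiv:1212.6614 — 2 statements merged into one kernel-verified Lean document; each statement's English description precedes it below -/
import Mathlib

section
/- Let (k₁, k₂, k₃) = (2, 2, 1), w₁ = (x⁻¹, 0, 0, 0, 0, (1/2)·x⁻²) and w₂ = (0, 0, 0, −x⁻¹, x⁻², 0) (components in the order (a₁₂, a₁₃, a₂₃, b₁, b₂, b₃)). Then E′(w₁), F′(w₁), E′(w₂), F′(w₂) ∈ B; whenever α·w₁ + β·w₂ ∈ B for α, β ∈ ℂ one has α = β = 0; and every z ∈ V with E′(z) ∈ B and F′(z) ∈ B lies in ℂ·w₁ + ℂ·w₂ + B. In other words, the 𝔰′-invariant part of H¹(ℂℙ¹, T₂) is two-dimensional with basis the classes of w₁ and w₂. -/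
noncomputable section

open LaurentPolynomial

/-- `L = ℂ[x, x⁻¹]`, the Laurent polynomials over `ℂ`. -/
abbrev L : Type := LaurentPolynomial ℂ

/-- The coefficient of `x^n` in a Laurent polynomial. -/
def coeffL (p : L) (n : ℤ) : ℂ := (AddMonoidAlgebra.coeff p : ℤ →₀ ℂ) n

lemma coeffL_zero (n : ℤ) : coeffL 0 n = 0 := rfl

lemma coeffL_add (a b : L) (n : ℤ) : coeffL (a + b) n = coeffL a n + coeffL b n := by
  unfold coeffL; erw [Finsupp.add_apply]; rfl

lemma coeffL_smul (c : ℂ) (a : L) (n : ℤ) : coeffL (c • a) n = c * coeffL a n := by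
  unfold coeffL; erw [Finsupp.smul_apply]; rfl

/-- `L₊`: Laurent polynomials involving only nonnegative powers of `x`. -/
def Lplus : Submodule ℂ L where
  carrier := {p | ∀ n : ℤ, n < 0 → coeffL p n = 0}
  zero_mem' := fun n _ => coeffL_zero n
  add_mem' := by intro a b ha hb n hn; rw [coeffL_add, ha n hn, hb n hn, add_zero]
  smul_mem' := by intro c p hp n hn; rw [coeffL_smul, hp n hn, mul_zero]

/-- `L₋`: Laurent polynomials involving only nonpositive powers of `x`. -/
def Lminus : Submodule ℂ L where
  carrier := {p | ∀ n : ℤ, 0 < n → coeffL p n = 0}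
  zero_mem' := fun n _ => coeffL_zero n
  add_mem' := by intro a b ha hb n hn; rw [coeffL_add, ha n hn, hb n hn, add_zero]
  smul_mem' := by intro c p hp n hn; rw [coeffL_smul, hp n hn, mul_zero]

/-- The derivative `d/dx` on Laurent polynomials. -/
def D (p : L) : L := Finsupp.sum (AddMonoidAlgebra.coeff p : ℤ →₀ ℂ) fun n a => ((n : ℂ) * a) • T (n - 1)

/-- `V = L⁶`, the model of Čech 1-cochains with values in `T₂`: a tuple
`v = (a₁₂, a₁₃, a₂₃, b₁, b₂, b₃)` (components `v 0, …, v 5`) encodes the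
vector field `Σ_{i<j} a_{ij}(x)ξᵢξⱼ∂/∂x + Σ_t b_t(x)ξ₁ξ₂ξ₃∂/∂ξ_t` on `U₀ ∩ U₁`. -/
abbrev V : Type := Fin 6 → L

/-- `B₀ = (L₊)⁶`: cochains holomorphic in `U₀`. -/
def B0 : Submodule ℂ V := Submodule.pi Set.univ fun _ => Lplus

/-- The linear map `v ↦ x^m · (v i)`. -/
def cndA (m : ℤ) (i : Fin 6) : V →ₗ[ℂ] L :=
  (LinearMap.mulLeft ℂ (T m)).comp (LinearMap.proj i)

/-- The linear map `v ↦ x^m · (v i − c·x⁻¹·(v j))`. -/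
def cndB (m : ℤ) (c : ℂ) (i j : Fin 6) : V →ₗ[ℂ] L :=
  (LinearMap.mulLeft ℂ (T m)).comp
    (LinearMap.proj i - c • (LinearMap.mulLeft ℂ (T (-1))).comp (LinearMap.proj j))

/-- `B₁`: cochains holomorphic in `U₁`, i.e. `v` with
`x^(kᵢ+kⱼ−2)·a_{ij} ∈ L₋` for all `i < j` and
`x^(d−k_t)·(b_t − σ_t·k_t·x⁻¹·a_{(t)}) ∈ L₋` for `t = 1, 2, 3`
(σ₁ = 1, σ₂ = −1, σ₃ = 1, a₍₁₎ = a₂₃, a₍₂₎ = a₁₃, a₍₃₎ = a₁₂, d = k₁+k₂+k₃). -/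
def B1 (k1 k2 k3 : ℤ) : Submodule ℂ V :=
  Lminus.comap (cndA (k1 + k2 - 2) 0) ⊓
  Lminus.comap (cndA (k1 + k3 - 2) 1) ⊓
  Lminus.comap (cndA (k2 + k3 - 2) 2) ⊓
  Lminus.comap (cndB (k2 + k3) ((k1 : ℂ)) 3 2) ⊓
  Lminus.comap (cndB (k1 + k3) (-(k2 : ℂ)) 4 1) ⊓
  Lminus.comap (cndB (k1 + k2) ((k3 : ℂ)) 5 0)

/-- The coboundary subspace `B = B₀ + B₁`. -/
def B (k1 k2 k3 : ℤ) : Submodule ℂ V := B0 ⊔ B1 k1 k2 k3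

/-- Action of `e = ∂/∂x` on cocycles: the componentwise derivative. -/
def Eop : V → V := fun v i => D (v i)

/-- Action of `f = ∂/∂y` on cocycles, with components
`a_{ij} ↦ (2 − kᵢ − kⱼ)·x·a_{ij} − x²·a_{ij}′` and
`b_t ↦ σ_t·k_t·a₍ₜ₎ − (d − k_t)·x·b_t − x²·b_t′`. -/
def Fop (k1 k2 k3 : ℤ) : V → V := fun v =>
  ![((2 - k1 - k2 : ℤ) : ℂ) • (T 1 * v 0) - T 2 * D (v 0),
    ((2 - k1 - k3 : ℤ) : ℂ) • (T 1 * v 1) - T 2 * D (v 1),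
    ((2 - k2 - k3 : ℤ) : ℂ) • (T 1 * v 2) - T 2 * D (v 2),
    (k1 : ℂ) • v 2 - ((k2 + k3 : ℤ) : ℂ) • (T 1 * v 3) - T 2 * D (v 3),
    -((k2 : ℂ) • v 1) - ((k1 + k3 : ℤ) : ℂ) • (T 1 * v 4) - T 2 * D (v 4),
    (k3 : ℂ) • v 0 - ((k1 + k2 : ℤ) : ℂ) • (T 1 * v 5) - T 2 * D (v 5)]

/-- `N(v) = (0, 0, a₁₃, −b₂, 0, 0)`; `e′ = ∂/∂x + ξ₂∂/∂ξ₁` acts by `E′ = E + N`. -/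
def Nop : V → V := fun v => ![0, 0, v 1, -v 4, 0, 0]

/-- `M(v) = (0, a₂₃, 0, 0, −b₁, 0)`; `f′ = ∂/∂y + η₁∂/∂η₂` acts by `F′ = F + M`. -/
def Mop : V → V := fun v => ![0, v 2, 0, 0, -v 3, 0]

/-- The action `E′ = E + N` of `e′ = ∂/∂x + ξ₂∂/∂ξ₁`. -/
def E'op : V → V := fun v => Eop v + Nop v

/-- The action `F′ = F + M` of `f′ = ∂/∂y + η₁∂/∂η₂`. -/
def F'op (k1 k2 k3 : ℤ) : V → V := fun v => Fop k1 k2 k3 v + Mop v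

/-- `N″(v) = (0, a₁₂, a₁₃, −b₂, −b₃, 0)`;
`e″ = ∂/∂x + ξ₂∂/∂ξ₁ + ξ₃∂/∂ξ₂` acts by `E″ = E + N″`. -/
def N''op : V → V := fun v => ![0, v 0, v 1, -v 4, -v 5, 0]

/-- `M″(v) = (2a₁₃, 2a₂₃, 0, 0, −2b₁, −2b₂)`;
`f″ = ∂/∂y + 2η₁∂/∂η₂ + 2η₂∂/∂η₃` acts by `F″ = F + M″`. -/
def M''op : V → V := fun v => ![(2 : ℂ) • v 1, (2 : ℂ) • v 2, 0, 0, -((2 : ℂ) • v 3), -((2 : ℂ) • v 4)]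

/-- The action `E″ = E + N″` of `e″`. -/
def E''op : V → V := fun v => Eop v + N''op v

/-- The action `F″ = F + M″` of `f″`. -/
def F''op (k1 k2 k3 : ℤ) : V → V := fun v => Fop k1 k2 k3 v + M''op v


-- ===================== auxiliary lemmas =====================

lemma coeffL_T' (m n : ℤ) : coeffL (T m) n = if m = n then 1 else 0 := by
  unfold coeffL; erw [Finsupp.single_apply]

lemma coeffL_T_mul (m : ℤ) (p : L) (n : ℤ) : coeffL (T m * p) n = coeffL p (n - m) := by
  unfold coeffL
  erw [AddMonoidAlgebra.coeff_single_mul_apply]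
  rw [one_mul]; ring_nf

lemma coeffL_neg (a : L) (n : ℤ) : coeffL (-a) n = -coeffL a n := by
  unfold coeffL; erw [Finsupp.neg_apply]; rfl

lemma coeffL_sub (a b : L) (n : ℤ) : coeffL (a - b) n = coeffL a n - coeffL b n := by
  unfold coeffL; erw [Finsupp.sub_apply]; rfl

lemma coeffL_D (p : L) (n : ℤ) : coeffL (D p) n = ((n + 1 : ℤ) : ℂ) * coeffL p (n + 1) := by
  unfold D coeffL
  rw [AddMonoidAlgebra.coeff_finsuppSum, Finsupp.sum_apply]
  rw [Finsupp.sum]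
  have : ∀ m ∈ (AddMonoidAlgebra.coeff p : ℤ →₀ ℂ).support,
      AddMonoidAlgebra.coeff (((m : ℂ) * (AddMonoidAlgebra.coeff p : ℤ →₀ ℂ) m) • T (m - 1) : L) n
        = if m = n + 1 then ((n + 1 : ℤ) : ℂ) * (AddMonoidAlgebra.coeff p : ℤ →₀ ℂ) (n + 1) else 0 := by
    intro m _
    rw [AddMonoidAlgebra.coeff_smul_apply]
    rw [show (AddMonoidAlgebra.coeff (T (m-1) : L) n) = if m - 1 = n then (1:ℂ) else 0 from Finsupp.single_apply]
    split_ifs with h1 h2 h2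
    · rw [smul_eq_mul, mul_one]; subst h2; rfl
    · exfalso; omega
    · exfalso; omega
    · rw [smul_zero]
  rw [Finset.sum_congr rfl this, Finset.sum_ite_eq' (AddMonoidAlgebra.coeff p : ℤ →₀ ℂ).support]
  split_ifs with h
  · rfl
  · rw [Finsupp.notMem_support_iff.mp h, mul_zero]

lemma mem_Lminus (p : L) : p ∈ Lminus ↔ ∀ n : ℤ, 0 < n → coeffL p n = 0 := Iff.rfl

lemma mem_Lplus (p : L) : p ∈ Lplus ↔ ∀ n : ℤ, n < 0 → coeffL p n = 0 := Iff.rfl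

/-- negative-degree truncation -/
def np (p : L) : L := AddMonoidAlgebra.ofCoeff (Finsupp.filter (fun n => n < 0) (AddMonoidAlgebra.coeff p : ℤ →₀ ℂ))

lemma coeffL_np (p : L) (n : ℤ) : coeffL (np p) n = if n < 0 then coeffL p n else 0 := by
  unfold coeffL np; rw [AddMonoidAlgebra.coeff_ofCoeff, Finsupp.filter_apply]

lemma cndA_eval (m : ℤ) (i : Fin 6) (v : V) : cndA m i v = T m * v i := rfl

lemma cndB_eval (m : ℤ) (c : ℂ) (i j : Fin 6) (v : V) :
    cndB m c i j v = T m * (v i - c • (T (-1) * v j)) := rfl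

lemma auxA (m : ℤ) (p : L) : (T m * p ∈ Lminus) ↔ ∀ s : ℤ, -m < s → coeffL p s = 0 := by
  rw [mem_Lminus]
  constructor
  · intro h s hs
    have := h (s + m) (by omega)
    rwa [coeffL_T_mul, add_sub_cancel_right] at this
  · intro h n hn
    rw [coeffL_T_mul]
    exact h _ (by omega)

lemma auxB (m : ℤ) (c : ℂ) (p q : L) :
    (T m * (p - c • (T (-1) * q)) ∈ Lminus) ↔
      ∀ s : ℤ, -m < s → coeffL p s = c * coeffL q (s + 1) := by
  rw [auxA]
  constructor
  · intro h s hs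
    have := h s hs
    rw [coeffL_sub, coeffL_smul, coeffL_T_mul, sub_eq_zero, sub_neg_eq_add] at this
    exact this
  · intro h s hs
    rw [coeffL_sub, coeffL_smul, coeffL_T_mul, sub_eq_zero, sub_neg_eq_add]
    exact h s hs

lemma mem_B1_iff (v : V) : v ∈ B1 2 2 1 ↔
    ((∀ s : ℤ, -2 < s → coeffL (v 0) s = 0) ∧
     (∀ s : ℤ, -1 < s → coeffL (v 1) s = 0) ∧
     (∀ s : ℤ, -1 < s → coeffL (v 2) s = 0) ∧
     (∀ s : ℤ, -3 < s → coeffL (v 3) s = 2 * coeffL (v 2) (s + 1)) ∧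
     (∀ s : ℤ, -3 < s → coeffL (v 4) s = -2 * coeffL (v 1) (s + 1)) ∧
     (∀ s : ℤ, -4 < s → coeffL (v 5) s = coeffL (v 0) (s + 1))) := by
  show _ ∈ (_ ⊓ _ ⊓ _ ⊓ _ ⊓ _ ⊓ _ : Submodule ℂ V) ↔ _
  simp only [Submodule.mem_inf, Submodule.mem_comap, cndA_eval, cndB_eval]
  simp only [auxB]
  simp only [auxA]
  norm_num
  constructor
  · rintro ⟨⟨⟨⟨⟨h0, h1⟩, h2⟩, h3⟩, h4⟩, h5⟩
    refine ⟨h0, h1, h2, fun s hs => ?_, fun s hs => ?_, fun s hs => ?_⟩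
    · simpa using h3 s hs
    · rw [h4 s hs]; try ring
    · simpa using h5 s hs
  · rintro ⟨h0, h1, h2, h3, h4, h5⟩
    refine ⟨⟨⟨⟨⟨h0, h1⟩, h2⟩, fun s hs => ?_⟩, fun s hs => ?_⟩, fun s hs => ?_⟩
    · simpa using h3 s hs
    · rw [h4 s hs]; try ring
    · simpa using h5 s hs

lemma mem_B0_iff (v : V) : v ∈ B0 ↔ ∀ i : Fin 6, ∀ n : ℤ, n < 0 → coeffL (v i) n = 0 := by
  unfold B0
  rw [Submodule.mem_pi]
  constructor
  · intro h i n hn; exact h i (Set.mem_univ i) n hn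
  · intro h i _; exact h i

/-- The 8 coefficient conditions characterising membership in B 2 2 1. -/
def Bcond (v : V) : Prop :=
  coeffL (v 0) (-1) = 0 ∧ coeffL (v 3) (-1) = 0 ∧ coeffL (v 4) (-1) = 0 ∧
  coeffL (v 5) (-1) = 0 ∧ coeffL (v 5) (-2) = 0 ∧
  coeffL (v 3) (-2) = 2 * coeffL (v 2) (-1) ∧
  coeffL (v 4) (-2) = -2 * coeffL (v 1) (-1) ∧
  coeffL (v 5) (-3) = coeffL (v 0) (-2)

lemma mem_B_iff (v : V) : v ∈ B 2 2 1 ↔ Bcond v := by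
  unfold B
  rw [Submodule.mem_sup]
  constructor
  · rintro ⟨a, ha, b, hb, rfl⟩
    rw [mem_B0_iff] at ha
    rw [mem_B1_iff] at hb
    obtain ⟨h0, h1, h2, h3, h4, h5⟩ := hb
    have ca : ∀ i : Fin 6, ∀ n : ℤ, n < 0 → coeffL ((a + b) i) n = coeffL (b i) n := by
      intro i n hn
      show coeffL (a i + b i) n = _
      rw [coeffL_add, ha i n hn, zero_add]
    refine ⟨?_, ?_, ?_, ?_, ?_, ?_, ?_, ?_⟩
    · rw [ca 0 (-1) (by norm_num)]; exact h0 (-1) (by norm_num)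
    · rw [ca 3 (-1) (by norm_num), h3 (-1) (by norm_num), show (-1:ℤ)+1 = 0 from rfl, h2 0 (by norm_num)]; ring
    · rw [ca 4 (-1) (by norm_num), h4 (-1) (by norm_num), show (-1:ℤ)+1 = 0 from rfl, h1 0 (by norm_num)]; ring
    · rw [ca 5 (-1) (by norm_num), h5 (-1) (by norm_num), show (-1:ℤ)+1 = 0 from rfl]
      exact h0 0 (by norm_num)
    · rw [ca 5 (-2) (by norm_num), h5 (-2) (by norm_num), show (-2:ℤ)+1 = -1 from rfl]
      exact h0 (-1) (by norm_num)
    · rw [ca 3 (-2) (by norm_num), ca 2 (-1) (by norm_num)]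
      rw [h3 (-2) (by norm_num), show (-2:ℤ)+1 = -1 from rfl]
    · rw [ca 4 (-2) (by norm_num), ca 1 (-1) (by norm_num)]
      rw [h4 (-2) (by norm_num), show (-2:ℤ)+1 = -1 from rfl]
    · rw [ca 5 (-3) (by norm_num), ca 0 (-2) (by norm_num)]
      rw [h5 (-3) (by norm_num), show (-3:ℤ)+1 = -2 from rfl]
  · rintro ⟨c1, c2, c3, c4, c5, c6, c7, c8⟩
    refine ⟨v - (fun i => np (v i)), ?_, (fun i => np (v i)), ?_, by abel⟩
    · rw [mem_B0_iff]
      intro i n hn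
      show coeffL (v i - np (v i)) n = 0
      rw [coeffL_sub, coeffL_np, if_pos hn, sub_self]
    · rw [mem_B1_iff]
      refine ⟨?_, ?_, ?_, ?_, ?_, ?_⟩ <;> intro s hs <;>
        simp only [coeffL_np]
      · rcases lt_or_ge s 0 with h | h
        · rw [if_pos h]
          have : s = -1 := by omega
          rw [this]; exact c1
        · rw [if_neg (by omega)]
      · rw [if_neg (by omega)]
      · rw [if_neg (by omega)]
      · rcases lt_or_ge s 0 with h | h
        · rw [if_pos h]
          rcases (by omega : s = -2 ∨ s = -1) with rfl | rfl
          · norm_num [if_pos (by norm_num : (-2:ℤ)+1 < 0)]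
            rw [c6]
          · norm_num
            rw [c2]; try ring
        · rw [if_neg (by omega), if_neg (by omega)]; ring
      · rcases lt_or_ge s 0 with h | h
        · rw [if_pos h]
          rcases (by omega : s = -2 ∨ s = -1) with rfl | rfl
          · norm_num [if_pos (by norm_num : (-2:ℤ)+1 < 0)]
            rw [c7]; ring
          · norm_num
            rw [c3]; try ring
        · rw [if_neg (by omega), if_neg (by omega)]; ring
      · rcases lt_or_ge s 0 with h | h
        · rw [if_pos h]
          rcases (by omega : s = -3 ∨ s = -2 ∨ s = -1) with rfl | rfl | rfl
          · norm_num [if_pos (by norm_num : (-3:ℤ)+1 < 0)]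
            exact c8
          · norm_num [if_pos (by norm_num : (-2:ℤ)+1 < 0)]
            rw [c5, c1]
          · norm_num
            exact c4
        · rw [if_neg (by omega), if_neg (by omega)]

lemma v6_0 (a b c d e f : L) : (![a,b,c,d,e,f] : V) 0 = a := rfl
lemma v6_1 (a b c d e f : L) : (![a,b,c,d,e,f] : V) 1 = b := rfl
lemma v6_2 (a b c d e f : L) : (![a,b,c,d,e,f] : V) 2 = c := rfl
lemma v6_3 (a b c d e f : L) : (![a,b,c,d,e,f] : V) 3 = d := rfl
lemma v6_4 (a b c d e f : L) : (![a,b,c,d,e,f] : V) 4 = e := rfl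
lemma v6_5 (a b c d e f : L) : (![a,b,c,d,e,f] : V) 5 = f := rfl

set_option maxRecDepth 20000 in
/-- For `(k₁, k₂, k₃) = (2, 2, 1)`, the 𝔰′-invariant part of `H¹(ℂℙ¹, T₂)` is
two-dimensional, with basis the classes of
`w₁ = (x⁻¹, 0, 0, 0, 0, (1/2)x⁻²)` and `w₂ = (0, 0, 0, −x⁻¹, x⁻², 0)`. -/
theorem stmt_7 (w1 w2 : V)
    (hw1 : w1 = ![T (-1), 0, 0, 0, 0, (1 / 2 : ℂ) • T (-2)])
    (hw2 : w2 = ![0, 0, 0, -T (-1), T (-2), 0]) :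
    (E'op w1 ∈ B 2 2 1 ∧ F'op 2 2 1 w1 ∈ B 2 2 1 ∧
     E'op w2 ∈ B 2 2 1 ∧ F'op 2 2 1 w2 ∈ B 2 2 1) ∧
    (∀ α β : ℂ, α • w1 + β • w2 ∈ B 2 2 1 → α = 0 ∧ β = 0) ∧
    (∀ z : V, E'op z ∈ B 2 2 1 → F'op 2 2 1 z ∈ B 2 2 1 →
      ∃ α β : ℂ, z - (α • w1 + β • w2) ∈ B 2 2 1) := by
  subst hw1 hw2
  refine ⟨⟨?_, ?_, ?_, ?_⟩, ?_, ?_⟩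
  · rw [mem_B_iff]
    unfold Bcond E'op Eop Nop
    norm_num [coeffL_add, coeffL_sub, coeffL_neg, coeffL_smul, coeffL_D, coeffL_T_mul,
      coeffL_T', coeffL_zero, v6_0, v6_1, v6_2, v6_3, v6_4, v6_5]
  · rw [mem_B_iff]
    unfold Bcond F'op Fop Mop
    simp only [Pi.add_apply, coeffL_add, coeffL_sub, coeffL_neg, coeffL_smul, coeffL_D,
      coeffL_T_mul, coeffL_T', coeffL_zero, v6_0, v6_1, v6_2, v6_3, v6_4, v6_5]
    norm_num
  · rw [mem_B_iff]
    unfold Bcond E'op Eop Nop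
    norm_num [coeffL_add, coeffL_sub, coeffL_neg, coeffL_smul, coeffL_D, coeffL_T_mul,
      coeffL_T', coeffL_zero, v6_0, v6_1, v6_2, v6_3, v6_4, v6_5]
  · rw [mem_B_iff]
    unfold Bcond F'op Fop Mop
    simp only [Pi.add_apply, coeffL_add, coeffL_sub, coeffL_neg, coeffL_smul, coeffL_D,
      coeffL_T_mul, coeffL_T', coeffL_zero, v6_0, v6_1, v6_2, v6_3, v6_4, v6_5]
    norm_num
  · intro a b h
    rw [mem_B_iff] at h
    unfold Bcond at h
    simp only [Pi.add_apply, Pi.smul_apply, coeffL_add, coeffL_sub, coeffL_neg, coeffL_smul, coeffL_D, coeffL_T_mul,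
      coeffL_T', coeffL_zero, v6_0, v6_1, v6_2, v6_3, v6_4, v6_5] at h
    norm_num at h
    tauto
  · intro z hE hF
    rw [mem_B_iff] at hE hF
    obtain ⟨e1, e2, e3, e4, e5, e6, e7, e8⟩ := hE
    obtain ⟨f1, f2, f3, f4, f5, f6, f7, f8⟩ := hF
    unfold E'op Eop Nop at e2 e5 e6 e8
    unfold F'op Fop Mop at f2 f5
    simp only [Pi.add_apply, coeffL_add, coeffL_sub, coeffL_neg, coeffL_smul, coeffL_D, coeffL_T_mul,
      coeffL_T', coeffL_zero, v6_0, v6_1, v6_2, v6_3, v6_4, v6_5] at e2 e5 e6 e8 f2 f5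
    norm_num at e2 e5 e6 e8 f2 f5
    refine ⟨coeffL (z 0) (-1), -coeffL (z 3) (-1), ?_⟩
    rw [mem_B_iff]
    unfold Bcond
    simp only [Pi.add_apply, Pi.sub_apply, Pi.smul_apply, coeffL_add, coeffL_sub, coeffL_neg, coeffL_smul, coeffL_D, coeffL_T_mul,
      coeffL_T', coeffL_zero, v6_0, v6_1, v6_2, v6_3, v6_4, v6_5]
    norm_num
    exact ⟨e2, e5, by linear_combination e8 / 2, by linear_combination -f2,
      by linear_combination -e6, by linear_combination -f5⟩
end
end

section
/- Let (k₁, k₂, k₃) = (2, 2, 1), w₁ = (x⁻¹, 0, 0, 0, 0, (1/2)·x⁻²) and w₂ = (0, 0, 0, −x⁻¹, x⁻², 0) (components in the order (a₁₂, a₁₃, a₂₃, b₁, b₂, b₃)). Then: E′(w₁), F′(w₁), E′(w₂), F′(w₂) ∈ B; w₁ ∉ B and w₂ ∉ B; there is no A ∈ G with Int A(w₁) − w₂ ∈ B; and every z ∈ V with E′(z) ∈ B, F′(z) ∈ B and z ∉ B admits some A ∈ G with either Int A(w₁) − z ∈ B or Int A(w₂) − z ∈ B. In other words, there exist exactly two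 up to isomorphism 𝔰′-even-homogeneous non-split supermanifolds with retract (2, 2, 1), corresponding to the classes of w₁ and w₂. -/
noncomputable section

open LaurentPolynomial

/-- `f` is a polynomial in `x` of degree at most `m` (in particular `f = 0`
when `m < 0`). -/
def degOK (m : ℤ) (f : L) : Prop := ∀ n : ℤ, n < 0 ∨ m < n → coeffL f n = 0

/-- The group `G = Aut E` of invertible `3×3` matrices `A = (A_{pq}(x))` whose
entry `A_{pq}` is a polynomial in `x` of degree at most `k q − k p` (and `0`
if `k q < k p`), and whose inverse has entries of the same form. -/
structure GElt (k : Fin 3 → ℤ) where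
  A : Matrix (Fin 3) (Fin 3) L
  Ainv : Matrix (Fin 3) (Fin 3) L
  mul_inv : A * Ainv = 1
  inv_mul : Ainv * A = 1
  degA : ∀ p q, degOK (k q - k p) (A p q)
  degAinv : ∀ p q, degOK (k q - k p) (Ainv p q)

/-- The action `Int A` of `G` on `V`:
`â_{pq} = Σ_{i<j} (A_{pi}A_{qj} − A_{qi}A_{pj})·a_{ij}` for `p < q`, and
`b̂_u = det(A)·(Σ_t β_{tu}·b_t + Σ_{i<j} σ_{l(ij)}·(β_{l(ij),u})′·a_{ij})`
where `β = A⁻¹` and `l(ij)` is the index complementary to `{i, j}`. -/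
def IntAct {k : Fin 3 → ℤ} (g : GElt k) (v : V) : V :=
  let A := g.A
  let β := g.Ainv
  ![(A 0 0 * A 1 1 - A 1 0 * A 0 1) * v 0 + (A 0 0 * A 1 2 - A 1 0 * A 0 2) * v 1 +
      (A 0 1 * A 1 2 - A 1 1 * A 0 2) * v 2,
    (A 0 0 * A 2 1 - A 2 0 * A 0 1) * v 0 + (A 0 0 * A 2 2 - A 2 0 * A 0 2) * v 1 +
      (A 0 1 * A 2 2 - A 2 1 * A 0 2) * v 2,
    (A 1 0 * A 2 1 - A 2 0 * A 1 1) * v 0 + (A 1 0 * A 2 2 - A 2 0 * A 1 2) * v 1 +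
      (A 1 1 * A 2 2 - A 2 1 * A 1 2) * v 2,
    A.det * (β 0 0 * v 3 + β 1 0 * v 4 + β 2 0 * v 5 +
      D (β 2 0) * v 0 - D (β 1 0) * v 1 + D (β 0 0) * v 2),
    A.det * (β 0 1 * v 3 + β 1 1 * v 4 + β 2 1 * v 5 +
      D (β 2 1) * v 0 - D (β 1 1) * v 1 + D (β 0 1) * v 2),
    A.det * (β 0 2 * v 3 + β 1 2 * v 4 + β 2 2 * v 5 +
      D (β 2 2) * v 0 - D (β 1 2) * v 1 + D (β 0 2) * v 2)]

namespace Pf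

lemma coeffL_T (k n : ℤ) : coeffL (T k) n = if k = n then 1 else 0 := by
  unfold coeffL; erw [LaurentPolynomial.T_apply]

lemma coeffL_T_mul (k : ℤ) (p : L) (n : ℤ) : coeffL (T k * p) n = coeffL p (n - k) := by
  unfold coeffL
  erw [AddMonoidAlgebra.coeff_single_mul_apply p (1:ℂ) k n, one_mul]
  congr 1; ring

lemma coeffL_C_mul (c : ℂ) (p : L) (n : ℤ) : coeffL (C c * p) n = c * coeffL p n := by
  unfold coeffL
  erw [AddMonoidAlgebra.coeff_single_zero_mul p c n]

lemma coeffL_neg (a : L) (n : ℤ) : coeffL (-a) n = - coeffL a n := by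
  unfold coeffL; erw [Finsupp.neg_apply]; rfl

lemma coeffL_sub (a b : L) (n : ℤ) : coeffL (a - b) n = coeffL a n - coeffL b n := by
  rw [sub_eq_add_neg, coeffL_add, coeffL_neg]; ring


lemma coeffL_D (p : L) (n : ℤ) : coeffL (D p) n = ((n+1 : ℤ) : ℂ) * coeffL p (n+1) := by
  unfold coeffL D
  erw [AddMonoidAlgebra.coeff_finsuppSum, Finsupp.sum_apply]
  have h : (Finsupp.sum p.coeff fun m a => AddMonoidAlgebra.coeff (((m:ℂ)*a) • T (m-1) : L) n)
      = Finsupp.sum p.coeff fun m a => if m = n+1 then ((m:ℂ)*a) else 0 := by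
    apply Finsupp.sum_congr
    intro m _
    erw [Finsupp.smul_apply]
    erw [LaurentPolynomial.T_apply n (m-1)]
    by_cases hm : m = n + 1
    · rw [if_pos (by omega : m - 1 = n), if_pos hm]; simp
    · rw [if_neg (by omega : ¬ m - 1 = n), if_neg hm]; simp
  erw [h, Finsupp.sum_ite_eq' p.coeff (n+1) (fun m a => ((m:ℂ)*a))]
  by_cases hs : (n+1) ∈ p.coeff.support
  · rw [if_pos hs]
  · rw [if_neg hs, Finsupp.notMem_support_iff.mp hs, mul_zero]


lemma coeffL_mul_T (p : L) (k n : ℤ) : coeffL (p * T k) n = coeffL p (n - k) := by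
  unfold coeffL
  erw [AddMonoidAlgebra.coeff_mul_single_apply p (1:ℂ) k n, mul_one]; rfl

lemma coeffL_C (c : ℂ) (n : ℤ) : coeffL (C c) n = if n = 0 then c else 0 := by
  unfold coeffL
  erw [Finsupp.single_apply]
  by_cases h : n = 0
  · rw [if_pos h.symm, if_pos h]
  · rw [if_neg (fun hh => h hh.symm), if_neg h]

lemma D_single (k : ℤ) (c : ℂ) : D (AddMonoidAlgebra.single k c : L) = ((k:ℂ)*c) • T (k-1) := by
  unfold D
  erw [Finsupp.sum_single_index]
  simp

lemma D_C (c : ℂ) : D (C c) = 0 := by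
  have : (C c : L) = AddMonoidAlgebra.single 0 c := rfl
  rw [this, D_single]; simp

lemma D_zero : D (0 : L) = 0 := by
  unfold D
  erw [Finsupp.sum_zero_index]

lemma D_one : D (1 : L) = 0 := by
  have : (1 : L) = C 1 := by simp
  rw [this, D_C]

lemma smul_one_eq_C (c : ℂ) : c • (1 : L) = C c := by
  have h1 : (1 : L) = AddMonoidAlgebra.single (0:ℤ) (1:ℂ) := rfl
  rw [h1]
  show c • AddMonoidAlgebra.single (0:ℤ) (1:ℂ) = C c
  rw [AddMonoidAlgebra.smul_single, smul_eq_mul, mul_one]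
  rfl

lemma D_CT1 (c : ℂ) : D (C c * T 1) = C c := by
  rw [← LaurentPolynomial.single_eq_C_mul_T, D_single]
  have e : (((1:ℤ):ℂ) * c) = c := by push_cast; ring
  have e2 : ((1:ℤ) - 1 : ℤ) = 0 := by ring
  rw [e, e2, LaurentPolynomial.T_zero, smul_one_eq_C]

/-- negative part of a Laurent polynomial -/
def negp (p : L) : L := AddMonoidAlgebra.ofCoeff (Finsupp.filter (fun n => n < 0) p.coeff)

lemma coeffL_negp (p : L) (n : ℤ) : coeffL (negp p) n = if n < 0 then coeffL p n else 0 := by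
  unfold coeffL negp
  erw [Finsupp.filter_apply]

lemma mem_Lplus {p : L} : p ∈ Lplus ↔ ∀ n : ℤ, n < 0 → coeffL p n = 0 := Iff.rfl
lemma mem_Lminus {p : L} : p ∈ Lminus ↔ ∀ n : ℤ, 0 < n → coeffL p n = 0 := Iff.rfl

lemma coeffL_cndA (m : ℤ) (i : Fin 6) (v : V) (n : ℤ) :
    coeffL (cndA m i v) n = coeffL (v i) (n - m) := by
  show coeffL (T m * v i) n = _
  rw [coeffL_T_mul]

lemma coeffL_cndB (m : ℤ) (c : ℂ) (i j : Fin 6) (v : V) (n : ℤ) :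
    coeffL (cndB m c i j v) n = coeffL (v i) (n - m) - c * coeffL (v j) (n - m + 1) := by
  show coeffL (T m * (v i - c • (T (-1) * v j))) n = _
  rw [coeffL_T_mul, coeffL_sub, coeffL_smul, coeffL_T_mul]
  have : n - m - (-1) = n - m + 1 := by ring
  rw [this]

/-- the 8 linear conditions characterizing membership in B 2 2 1 -/
def P (v : V) : Prop :=
  coeffL (v 0) (-1) = 0 ∧
  coeffL (v 3) (-1) = 0 ∧
  coeffL (v 3) (-2) = 2 * coeffL (v 2) (-1) ∧
  coeffL (v 4) (-1) = 0 ∧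
  coeffL (v 4) (-2) = -2 * coeffL (v 1) (-1) ∧
  coeffL (v 5) (-1) = 0 ∧
  coeffL (v 5) (-2) = coeffL (v 0) (-1) ∧
  coeffL (v 5) (-3) = coeffL (v 0) (-2)

lemma P_add {u v : V} (hu : P u) (hv : P v) : P (u + v) := by
  obtain ⟨u0, u1, u2, u3, u4, u5, u6, u7⟩ := hu
  obtain ⟨v0, v1, v2, v3, v4, v5, v6, v7⟩ := hv
  refine ⟨?_, ?_, ?_, ?_, ?_, ?_, ?_, ?_⟩ <;>
    simp only [Pi.add_apply, coeffL_add, u0, u1, u2, u3, u4, u5, u6, u7,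
      v0, v1, v2, v3, v4, v5, v6, v7] <;> ring

lemma P_of_mem_B0 {v : V} (h : v ∈ B0) : P v := by
  have h' : ∀ i : Fin 6, ∀ n : ℤ, n < 0 → coeffL (v i) n = 0 := by
    intro i
    exact (Submodule.mem_pi.mp h) i (Set.mem_univ i)
  refine ⟨h' 0 _ (by norm_num), h' 3 _ (by norm_num), ?_, h' 4 _ (by norm_num), ?_,
    h' 5 _ (by norm_num), ?_, ?_⟩ <;>
    rw [h' _ _ (by norm_num), h' _ _ (by norm_num)] <;> ring

lemma P_of_mem_B1 {v : V} (h : v ∈ B1 2 2 1) : P v := by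
  simp only [B1, Submodule.mem_inf, Submodule.mem_comap] at h
  obtain ⟨⟨⟨⟨⟨h1, h2⟩, h3⟩, h4⟩, h5⟩, h6⟩ := h
  -- h1 : cndA (2+2-2) 0 ; h2 : cndA (2+1-2) 1 ; h3 : cndA (2+1-2) 2
  -- h4 : cndB (2+1) 2 3 2 ; h5 : cndB (2+1) (-2) 4 1 ; h6 : cndB (2+2) 1 5 0
  have ha0 : ∀ m : ℤ, -2 < m → coeffL (v 0) m = 0 := by
    intro m hm
    have := (mem_Lminus.mp h1) (m + (2+2-2)) (by omega)
    rw [coeffL_cndA] at this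
    have e : m + (2+2-2) - (2+2-2) = m := by ring
    rwa [e] at this
  have ha1 : ∀ m : ℤ, -1 < m → coeffL (v 1) m = 0 := by
    intro m hm
    have := (mem_Lminus.mp h2) (m + (2+1-2)) (by omega)
    rw [coeffL_cndA] at this
    have e : m + (2+1-2) - (2+1-2) = m := by ring
    rwa [e] at this
  have ha2 : ∀ m : ℤ, -1 < m → coeffL (v 2) m = 0 := by
    intro m hm
    have := (mem_Lminus.mp h3) (m + (2+1-2)) (by omega)
    rw [coeffL_cndA] at this
    have e : m + (2+1-2) - (2+1-2) = m := by ring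
    rwa [e] at this
  have hb1 : ∀ m : ℤ, -3 < m →
      coeffL (v 3) m - (2:ℂ) * coeffL (v 2) (m+1) = 0 := by
    intro m hm
    have := (mem_Lminus.mp h4) (m + (2+1)) (by omega)
    rw [coeffL_cndB] at this
    have e : m + (2+1) - (2+1) = m := by ring
    rw [e] at this
    convert this using 3 <;> push_cast <;> ring
  have hb2 : ∀ m : ℤ, -3 < m →
      coeffL (v 4) m - (-2:ℂ) * coeffL (v 1) (m+1) = 0 := by
    intro m hm
    have := (mem_Lminus.mp h5) (m + (2+1)) (by omega)
    rw [coeffL_cndB] at this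
    have e : m + (2+1) - (2+1) = m := by ring
    rw [e] at this
    convert this using 3 <;> push_cast <;> ring
  have hb3 : ∀ m : ℤ, -4 < m →
      coeffL (v 5) m - (1:ℂ) * coeffL (v 0) (m+1) = 0 := by
    intro m hm
    have := (mem_Lminus.mp h6) (m + (2+2)) (by omega)
    rw [coeffL_cndB] at this
    have e : m + (2+2) - (2+2) = m := by ring
    rw [e] at this
    convert this using 3 <;> push_cast <;> ring
  have e0 : (-1 : ℤ) + 1 = 0 := by norm_num
  have e1 : (-2 : ℤ) + 1 = -1 := by norm_num
  have e2 : (-3 : ℤ) + 1 = -2 := by norm_num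
  refine ⟨ha0 (-1) (by norm_num), ?_, ?_, ?_, ?_, ?_, ?_, ?_⟩
  · have := hb1 (-1) (by norm_num)
    rw [e0, ha2 0 (by norm_num)] at this
    linear_combination this
  · have := hb1 (-2) (by norm_num)
    rw [e1] at this
    linear_combination this
  · have := hb2 (-1) (by norm_num)
    rw [e0, ha1 0 (by norm_num)] at this
    linear_combination this
  · have := hb2 (-2) (by norm_num)
    rw [e1] at this
    linear_combination this
  · have := hb3 (-1) (by norm_num)
    rw [e0, ha0 0 (by norm_num)] at this
    linear_combination this
  · have := hb3 (-2) (by norm_num)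
    rw [e1, ha0 (-1) (by norm_num)] at this
    linear_combination this - ha0 (-1) (by norm_num)
  · have := hb3 (-3) (by norm_num)
    rw [e2] at this
    linear_combination this

lemma mem_B_of_P {v : V} (hp : P v) : v ∈ B 2 2 1 := by
  obtain ⟨p0, p1, p2, p3, p4, p5, p6, p7⟩ := hp
  set w : V := fun i => negp (v i) with hw
  have hwB1 : w ∈ B1 2 2 1 := by
    simp only [B1, Submodule.mem_inf, Submodule.mem_comap]
    refine ⟨⟨⟨⟨⟨?_, ?_⟩, ?_⟩, ?_⟩, ?_⟩, ?_⟩ <;> rw [mem_Lminus] <;> intro n hn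
    · rw [coeffL_cndA, coeffL_negp]
      split_ifs with h
      · have e : n - (2+2-2) = -1 := by omega
        rw [e]; exact p0
      · rfl
    · rw [coeffL_cndA, coeffL_negp]
      split_ifs with h
      · omega
      · rfl
    · rw [coeffL_cndA, coeffL_negp]
      split_ifs with h
      · omega
      · rfl
    · rw [coeffL_cndB, coeffL_negp, coeffL_negp]
      split_ifs with h h'
      · rcases (by omega : n - (2+1) = -1 ∨ n - (2+1) = -2) with e | e
        · omega
        · have e2 : n - (2+1) + 1 = -1 := by omega
          rw [e2, e, p2]; push_cast; ring
      · have e : n - (2+1) = -1 := by omega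
        rw [e, p1]; push_cast; ring
      · omega
      · push_cast; ring
    · rw [coeffL_cndB, coeffL_negp, coeffL_negp]
      split_ifs with h h'
      · rcases (by omega : n - (2+1) = -1 ∨ n - (2+1) = -2) with e | e
        · omega
        · have e2 : n - (2+1) + 1 = -1 := by omega
          rw [e2, e, p4]; push_cast; ring
      · have e : n - (2+1) = -1 := by omega
        rw [e, p3]; push_cast; ring
      · omega
      · push_cast; ring
    · rw [coeffL_cndB, coeffL_negp, coeffL_negp]
      split_ifs with h h'
      · rcases (by omega : n - (2+2) = -1 ∨ n - (2+2) = -2 ∨ n - (2+2) = -3) with e | e | e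
        · omega
        · have e2 : n - (2+2) + 1 = -1 := by omega
          rw [e2, e, p6, p0]; push_cast; ring
        · have e2 : n - (2+2) + 1 = -2 := by omega
          rw [e2, e, p7]; push_cast; ring
      · have e : n - (2+2) = -1 := by omega
        rw [e, p5]; push_cast; ring
      · omega
      · push_cast; ring
  have hvw : v - w ∈ B0 := by
    rw [B0, Submodule.mem_pi]
    intro i _
    rw [mem_Lplus]
    intro n hn
    show coeffL (v i - w i) n = 0
    rw [coeffL_sub, hw]
    simp only
    rw [coeffL_negp, if_pos hn]
    ring
  have : v = (v - w) + w := by ring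
  rw [this, B]
  exact Submodule.add_mem _ (Submodule.mem_sup_left hvw) (Submodule.mem_sup_right hwB1)

lemma mem_B_iff (v : V) : v ∈ B 2 2 1 ↔ P v := by
  constructor
  · intro h
    rw [B] at h
    obtain ⟨y, hy, z, hz, rfl⟩ := Submodule.mem_sup.mp h
    exact P_add (P_of_mem_B0 hy) (P_of_mem_B1 hz)
  · exact mem_B_of_P



@[simp] lemma v6_0 {α : Type*} (a b c d e f : α) : (![a,b,c,d,e,f]) (0 : Fin 6) = a := rfl
@[simp] lemma v6_1 {α : Type*} (a b c d e f : α) : (![a,b,c,d,e,f]) (1 : Fin 6) = b := rfl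
@[simp] lemma v6_2 {α : Type*} (a b c d e f : α) : (![a,b,c,d,e,f]) (2 : Fin 6) = c := rfl
@[simp] lemma v6_3 {α : Type*} (a b c d e f : α) : (![a,b,c,d,e,f]) (3 : Fin 6) = d := rfl
@[simp] lemma v6_4 {α : Type*} (a b c d e f : α) : (![a,b,c,d,e,f]) (4 : Fin 6) = e := rfl
@[simp] lemma v6_5 {α : Type*} (a b c d e f : α) : (![a,b,c,d,e,f]) (5 : Fin 6) = f := rfl
@[simp] lemma v3_0 {α : Type*} (a b c : α) : (![a,b,c]) (0 : Fin 3) = a := rfl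
@[simp] lemma v3_1 {α : Type*} (a b c : α) : (![a,b,c]) (1 : Fin 3) = b := rfl
@[simp] lemma v3_2 {α : Type*} (a b c : α) : (![a,b,c]) (2 : Fin 3) = c := rfl

lemma memE'w1 : E'op ![T (-1), 0, 0, 0, 0, (1 / 2 : ℂ) • T (-2)] ∈ B 2 2 1 := by
  apply mem_B_of_P
  refine ⟨?_, ?_, ?_, ?_, ?_, ?_, ?_, ?_⟩ <;>
    simp only [E'op, Eop, Nop, Pi.add_apply, v6_0, v6_1, v6_2, v6_3, v6_4, v6_5,
      coeffL_add, coeffL_sub, coeffL_smul, coeffL_D, coeffL_T, coeffL_zero, coeffL_neg,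
      D_zero] <;> norm_num

lemma memF'w1 : F'op 2 2 1 ![T (-1), 0, 0, 0, 0, (1 / 2 : ℂ) • T (-2)] ∈ B 2 2 1 := by
  apply mem_B_of_P
  refine ⟨?_, ?_, ?_, ?_, ?_, ?_, ?_, ?_⟩ <;>
    simp only [F'op, Fop, Mop, Pi.add_apply, v6_0, v6_1, v6_2, v6_3, v6_4, v6_5,
      coeffL_add, coeffL_sub, coeffL_smul, coeffL_D, coeffL_T, coeffL_T_mul, coeffL_zero,
      coeffL_neg, D_zero] <;> norm_num

lemma memE'w2 : E'op ![0, 0, 0, -T (-1), T (-2), 0] ∈ B 2 2 1 := by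
  apply mem_B_of_P
  refine ⟨?_, ?_, ?_, ?_, ?_, ?_, ?_, ?_⟩ <;>
    simp only [E'op, Eop, Nop, Pi.add_apply, v6_0, v6_1, v6_2, v6_3, v6_4, v6_5,
      coeffL_add, coeffL_sub, coeffL_smul, coeffL_D, coeffL_T, coeffL_zero, coeffL_neg,
      D_zero] <;> norm_num

lemma memF'w2 : F'op 2 2 1 ![0, 0, 0, -T (-1), T (-2), 0] ∈ B 2 2 1 := by
  apply mem_B_of_P
  refine ⟨?_, ?_, ?_, ?_, ?_, ?_, ?_, ?_⟩ <;>
    simp only [F'op, Fop, Mop, Pi.add_apply, v6_0, v6_1, v6_2, v6_3, v6_4, v6_5,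
      coeffL_add, coeffL_sub, coeffL_smul, coeffL_D, coeffL_T, coeffL_T_mul, coeffL_zero,
      coeffL_neg, D_zero] <;> norm_num

lemma nmem_w1 : (![T (-1), 0, 0, 0, 0, (1 / 2 : ℂ) • T (-2)] : V) ∉ B 2 2 1 := by
  intro h
  have := ((mem_B_iff _).mp h).1
  rw [v6_0, coeffL_T] at this
  norm_num at this

lemma nmem_w2 : (![0, 0, 0, -T (-1), T (-2), 0] : V) ∉ B 2 2 1 := by
  intro h
  have := ((mem_B_iff _).mp h).2.1
  rw [v6_3, coeffL_neg, coeffL_T] at this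
  norm_num at this


lemma L_ext {f g : L} (h : ∀ n, coeffL f n = coeffL g n) : f = g := AddMonoidAlgebra.coeff_injective (Finsupp.ext h)

lemma const_eq_C {f : L} (h : degOK 0 f) : f = C (coeffL f 0) := by
  apply L_ext
  intro n
  rw [coeffL_C]
  by_cases hn : n = 0
  · rw [if_pos hn, hn]
  · rw [if_neg hn, h n (by omega)]

lemma eq_zero_of_degOK_neg {m : ℤ} (hm : m < 0) {f : L} (h : degOK m f) : f = 0 := by
  apply L_ext
  intro n
  rw [coeffL_zero, h n (by omega)]

lemma coeffL_one (n : ℤ) : coeffL (1 : L) n = if n = 0 then 1 else 0 := by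
  have : (1 : L) = C 1 := by simp
  rw [this, coeffL_C]

lemma k221_eval : (![2,2,1] : Fin 3 → ℤ) 0 = 2 ∧ (![2,2,1] : Fin 3 → ℤ) 1 = 2 ∧
    (![2,2,1] : Fin 3 → ℤ) 2 = 1 := ⟨rfl, rfl, rfl⟩

lemma no_iso (g : GElt ![2, 2, 1]) :
    IntAct g ![T (-1), 0, 0, 0, 0, (1 / 2 : ℂ) • T (-2)] - ![0, 0, 0, -T (-1), T (-2), 0]
      ∉ B 2 2 1 := by
  intro h
  have hp := ((mem_B_iff _).mp h).1
  -- the four 2x2 block entries are constants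
  have da : degOK 0 (g.A 0 0) := by have := g.degA 0 0; simpa using this
  have db : degOK 0 (g.A 0 1) := by have := g.degA 0 1; simpa using this
  have dc : degOK 0 (g.A 1 0) := by have := g.degA 1 0; simpa using this
  have dd : degOK 0 (g.A 1 1) := by have := g.degA 1 1; simpa using this
  have da' : degOK 0 (g.Ainv 0 0) := by have := g.degAinv 0 0; simpa using this
  have db' : degOK 0 (g.Ainv 0 1) := by have := g.degAinv 0 1; simpa using this
  have dc' : degOK 0 (g.Ainv 1 0) := by have := g.degAinv 1 0; simpa using this
  have dd' : degOK 0 (g.Ainv 1 1) := by have := g.degAinv 1 1; simpa using this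
  have z02 : g.A 0 2 = 0 := by
    have hh := g.degA 0 2
    norm_num at hh
    exact eq_zero_of_degOK_neg (by norm_num) hh
  have z12 : g.A 1 2 = 0 := by
    have hh := g.degA 1 2
    norm_num at hh
    exact eq_zero_of_degOK_neg (by norm_num) hh
  have z02' : g.Ainv 0 2 = 0 := by
    have hh := g.degAinv 0 2
    norm_num at hh
    exact eq_zero_of_degOK_neg (by norm_num) hh
  have z12' : g.Ainv 1 2 = 0 := by
    have hh := g.degAinv 1 2
    norm_num at hh
    exact eq_zero_of_degOK_neg (by norm_num) hh
  set a := coeffL (g.A 0 0) 0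
  set bb := coeffL (g.A 0 1) 0
  set c := coeffL (g.A 1 0) 0
  set d := coeffL (g.A 1 1) 0
  set a' := coeffL (g.Ainv 0 0) 0
  set b' := coeffL (g.Ainv 0 1) 0
  set c' := coeffL (g.Ainv 1 0) 0
  set d' := coeffL (g.Ainv 1 1) 0
  have ea := const_eq_C da
  have eb := const_eq_C db
  have ec := const_eq_C dc
  have ed := const_eq_C dd
  have ea' := const_eq_C da'
  have eb' := const_eq_C db'
  have ec' := const_eq_C dc'
  have ed' := const_eq_C dd'
  -- entry equations of A * Ainv = 1
  have me : ∀ i j : Fin 3, (g.A * g.Ainv) i j = (1 : Matrix (Fin 3) (Fin 3) L) i j := by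
    intro i j; rw [g.mul_inv]
  have h00 := me 0 0
  have h01 := me 0 1
  have h10 := me 1 0
  have h11 := me 1 1
  rw [Matrix.mul_apply, Fin.sum_univ_three] at h00 h01 h10 h11
  rw [z02, ea, eb, ea', ec'] at h00
  rw [z02, ea, eb, eb', ed'] at h01
  rw [z12, ec, ed, ea', ec'] at h10
  rw [z12, ec, ed, eb', ed'] at h11
  have c00 : a * a' + bb * c' = 1 := by
    have := congrArg (fun p => coeffL p 0) h00
    simpa [← map_mul, ← map_add, coeffL_add, coeffL_C, coeffL_one, coeffL_zero, Matrix.one_apply] using this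
  have c01 : a * b' + bb * d' = 0 := by
    have := congrArg (fun p => coeffL p 0) h01
    simpa [← map_mul, ← map_add, coeffL_add, coeffL_C, coeffL_one, coeffL_zero, Matrix.one_apply] using this
  have c10 : c * a' + d * c' = 0 := by
    have := congrArg (fun p => coeffL p 0) h10
    simpa [← map_mul, ← map_add, coeffL_add, coeffL_C, coeffL_one, coeffL_zero, Matrix.one_apply] using this
  have c11 : c * b' + d * d' = 1 := by
    have := congrArg (fun p => coeffL p 0) h11
    simpa [← map_mul, ← map_add, coeffL_add, coeffL_C, coeffL_one, coeffL_zero, Matrix.one_apply] using this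
  have key : (a * d - bb * c) * (a' * d' - b' * c') = 1 := by
    linear_combination (c * b' + d * d') * c00 + c11 - (c * a' + d * c') * c01
  have hne : a * d - bb * c ≠ 0 := by
    intro h0
    rw [h0, zero_mul] at key
    exact zero_ne_one key
  -- now compute the coefficient
  apply hne
  have : coeffL ((IntAct g ![T (-1), 0, 0, 0, 0, (1 / 2 : ℂ) • T (-2)]) 0) (-1)
      - coeffL ((![0, 0, 0, -T (-1), T (-2), 0] : V) 0) (-1) = 0 := by
    rw [← coeffL_sub]
    exact hp
  rw [v6_0, coeffL_zero, sub_zero] at this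
  rw [show (IntAct g ![T (-1), 0, 0, 0, 0, (1 / 2 : ℂ) • T (-2)]) 0
      = (g.A 0 0 * g.A 1 1 - g.A 1 0 * g.A 0 1) * T (-1)
        + (g.A 0 0 * g.A 1 2 - g.A 1 0 * g.A 0 2) * (0:L)
        + (g.A 0 1 * g.A 1 2 - g.A 1 1 * g.A 0 2) * (0:L) from rfl] at this
  rw [ea, eb, ec, ed] at this
  simp only [← map_mul, ← map_sub, coeffL_add, coeffL_mul_T, coeffL_C, coeffL_zero,
    mul_zero, add_zero] at this
  norm_num at this
  linear_combination this


lemma degOK_zero (m : ℤ) : degOK m 0 := fun n _ => coeffL_zero n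

lemma degOK_C {m : ℤ} (h : 0 ≤ m) (c : ℂ) : degOK m (C c) := by
  intro n hn
  rw [coeffL_C, if_neg (by omega)]

lemma degOK_one {m : ℤ} (h : 0 ≤ m) : degOK m (1 : L) := by
  intro n hn
  rw [coeffL_one, if_neg (by omega)]

lemma degOK_negC {m : ℤ} (h : 0 ≤ m) (c : ℂ) : degOK m (-C c) := by
  intro n hn
  rw [coeffL_neg, coeffL_C, if_neg (by omega), neg_zero]

lemma degOK_CT1 {m : ℤ} (h : 1 ≤ m) (c : ℂ) : degOK m (C c * T 1) := by
  intro n hn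
  rw [coeffL_C_mul, coeffL_T, if_neg (by omega), mul_zero]

lemma CT1_mul_C (c d : ℂ) : (C c * T 1) * C d = C (c * d) * T 1 := by
  rw [map_mul]
  ring

/-- the automorphism used when α ≠ 0 -/
def g1 (α β : ℂ) (hα : α ≠ 0) : GElt ![2, 2, 1] where
  A := ![![C α, 0, 0], ![0, 1, 0], ![C (-(2*β)/3) * T 1, C (-(2*β)/(3*α)), 1]]
  Ainv := ![![C α⁻¹, 0, 0], ![0, 1, 0], ![C ((2*β)/(3*α)) * T 1, C ((2*β)/(3*α)), 1]]
  mul_inv := by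
    apply Matrix.ext
    intro i j
    fin_cases i <;> fin_cases j <;>
      erw [Matrix.mul_apply] <;>
      simp [Matrix.mul_apply, Fin.sum_univ_three, Matrix.one_apply, ← map_mul,
        mul_inv_cancel₀ hα, CT1_mul_C]
    · rw [← add_mul, ← map_add,
        show -(2 * β) / 3 * α⁻¹ + 2 * β / (3 * α) = 0 by field_simp; ring, map_zero, zero_mul]
    · rw [← map_add, show -(2 * β) / (3 * α) + 2 * β / (3 * α) = 0 by ring, map_zero]
  inv_mul := by
    apply Matrix.ext
    intro i j
    fin_cases i <;> fin_cases j <;>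
      erw [Matrix.mul_apply] <;>
      simp [Matrix.mul_apply, Fin.sum_univ_three, Matrix.one_apply, ← map_mul,
        inv_mul_cancel₀ hα, CT1_mul_C]
    · rw [← add_mul, ← map_add,
        show 2 * β / (3 * α) * α + -(2 * β) / 3 = 0 by field_simp; ring, map_zero, zero_mul]
    · rw [← map_add, show 2 * β / (3 * α) + -(2 * β) / (3 * α) = 0 by ring, map_zero]
  degA := by
    intro p q
    fin_cases p <;> fin_cases q <;>
      norm_num <;>
      first
        | exact degOK_C (by norm_num) _
        | exact degOK_one (by norm_num)
        | exact degOK_zero _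
        | exact degOK_negC (by norm_num) _
        | exact degOK_CT1 (by norm_num) _
  degAinv := by
    intro p q
    fin_cases p <;> fin_cases q <;>
      norm_num <;>
      first
        | exact degOK_C (by norm_num) _
        | exact degOK_one (by norm_num)
        | exact degOK_zero _
        | exact degOK_negC (by norm_num) _
        | exact degOK_CT1 (by norm_num) _


/-- the automorphism used when α = 0, β ≠ 0 -/
def g2 (β : ℂ) (hβ : β ≠ 0) : GElt ![2, 2, 1] where
  A := ![![C (-β), 0, 0], ![0, C (-β), 0], ![0, 0, 1]]
  Ainv := ![![C (-β⁻¹), 0, 0], ![0, C (-β⁻¹), 0], ![0, 0, 1]]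
  mul_inv := by
    apply Matrix.ext
    intro i j
    fin_cases i <;> fin_cases j <;>
      erw [Matrix.mul_apply] <;>
      simp [Matrix.mul_apply, Fin.sum_univ_three, Matrix.one_apply, ← map_mul,
        Matrix.vecHead, Matrix.vecTail, mul_inv_cancel₀ hβ]
  inv_mul := by
    apply Matrix.ext
    intro i j
    fin_cases i <;> fin_cases j <;>
      erw [Matrix.mul_apply] <;>
      simp [Matrix.mul_apply, Fin.sum_univ_three, Matrix.one_apply, ← map_mul,
        Matrix.vecHead, Matrix.vecTail, inv_mul_cancel₀ hβ]
  degA := by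
    intro p q
    fin_cases p <;> fin_cases q <;>
      norm_num <;>
      first
        | exact degOK_C (by norm_num) _
        | exact degOK_one (by norm_num)
        | exact degOK_zero _
        | exact degOK_negC (by norm_num) _
        | exact degOK_CT1 (by norm_num) _
  degAinv := by
    intro p q
    fin_cases p <;> fin_cases q <;>
      norm_num <;>
      first
        | exact degOK_C (by norm_num) _
        | exact degOK_one (by norm_num)
        | exact degOK_zero _
        | exact degOK_negC (by norm_num) _
        | exact degOK_CT1 (by norm_num) _

lemma det3 (a b c d e f g h i : L) :
    Matrix.det (![![a, b, c], ![d, e, f], ![g, h, i]] : Matrix (Fin 3) (Fin 3) L) =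
      a * e * i - a * f * h - b * d * i + b * f * g + c * d * h - c * e * g :=
  Matrix.det_fin_three _

lemma classify (z : V) (hE : E'op z ∈ B 2 2 1) (hF : F'op 2 2 1 z ∈ B 2 2 1)
    (hz : z ∉ B 2 2 1) :
    ∃ g : GElt ![2, 2, 1],
      IntAct g ![T (-1), 0, 0, 0, 0, (1 / 2 : ℂ) • T (-2)] - z ∈ B 2 2 1 ∨
      IntAct g ![0, 0, 0, -T (-1), T (-2), 0] - z ∈ B 2 2 1 := by
  obtain ⟨q0, q1, q2, q3, q4, q5, q6, q7⟩ := (mem_B_iff _).mp hE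
  obtain ⟨r0, r1, r2, r3, r4, r5, r6, r7⟩ := (mem_B_iff _).mp hF
  simp only [E'op, Eop, Nop, Pi.add_apply, v6_0, v6_1, v6_2, v6_3, v6_4, v6_5,
    coeffL_add, coeffL_neg, coeffL_D, coeffL_zero] at q1 q2 q6 q7
  norm_num at q1 q2 q6 q7
  simp only [F'op, Fop, Mop, Pi.add_apply, v6_0, v6_1, v6_2, v6_3, v6_4, v6_5,
    coeffL_sub, coeffL_add, coeffL_neg, coeffL_smul, coeffL_T_mul, coeffL_D,
    coeffL_zero] at r1 r6
  norm_num at r1 r6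
  have f2 : coeffL (z 3) (-2) = 2 * coeffL (z 2) (-1) := by linear_combination -r1
  have f3 : coeffL (z 4) (-1) = 0 := by linear_combination q1
  have f4 : coeffL (z 4) (-2) = -coeffL (z 3) (-1) - 2 * coeffL (z 1) (-1) := by
    linear_combination -q2
  have f5 : coeffL (z 5) (-1) = 0 := by linear_combination q6
  have f6 : 2 * coeffL (z 5) (-2) = coeffL (z 0) (-1) := by linear_combination q7
  have f7 : coeffL (z 5) (-3) = coeffL (z 0) (-2) := by linear_combination -r6
  by_cases hα : coeffL (z 0) (-1) = 0
  · by_cases hβ : coeffL (z 3) (-1) = 0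
    · -- z ∈ B, contradiction
      exfalso
      apply hz
      apply mem_B_of_P
      exact ⟨hα, hβ, f2, f3, by linear_combination f4 - hβ, f5,
        by linear_combination (1/2 : ℂ) * f6 - (1/2 : ℂ) * hα, f7⟩
    · -- use g2 and w2
      refine ⟨g2 (coeffL (z 3) (-1)) hβ, Or.inr ?_⟩
      have hinv : coeffL (z 3) (-1) * (coeffL (z 3) (-1))⁻¹ = 1 := mul_inv_cancel₀ hβ
      apply mem_B_of_P
      refine ⟨?_, ?_, ?_, ?_, ?_, ?_, ?_, ?_⟩ <;>
        simp only [Pi.sub_apply, coeffL_sub, IntAct, g2, Matrix.det_fin_three, det3,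
          v6_0, v6_1, v6_2, v6_3, v6_4, v6_5, v3_0, v3_1, v3_2,
          D_C, D_CT1, D_zero, D_one, mul_zero, zero_mul, mul_one, one_mul,
          add_zero, zero_add, sub_zero, zero_sub, neg_zero, mul_add, mul_sub,
          mul_assoc, mul_smul_comm, smul_mul_assoc, mul_T_assoc, smul_zero,
          coeffL_add, coeffL_neg, coeffL_smul, coeffL_C_mul, coeffL_T_mul,
          coeffL_mul_T, coeffL_T, coeffL_C, coeffL_zero, coeffL_one] <;>
        norm_num
      · first
        | linear_combination -hα
        | linear_combination -(-hα)
      · first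
        | linear_combination coeffL (z 3) (-1) * hinv
        | linear_combination -(coeffL (z 3) (-1) * hinv)
      · first
        | linear_combination -f2
        | linear_combination -(-f2)
      · first
        | linear_combination -f3
        | linear_combination -(-f3)
      · first
        | linear_combination -f4 - coeffL (z 3) (-1) * hinv
        | linear_combination -(-f4 - coeffL (z 3) (-1) * hinv)
      · first
        | linear_combination -f5
        | linear_combination -(-f5)
      · first
        | linear_combination (-1/2 : ℂ) * f6 + (1/2 : ℂ) * hα
        | linear_combination -((-1/2 : ℂ) * f6 + (1/2 : ℂ) * hα)
      · first
        | linear_combination -f7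
        | linear_combination -(-f7)
  · -- use g1 and w1
    refine ⟨g1 (coeffL (z 0) (-1)) (coeffL (z 3) (-1)) hα, Or.inl ?_⟩
    have hinv : coeffL (z 0) (-1) * (coeffL (z 0) (-1))⁻¹ = 1 := mul_inv_cancel₀ hα
    apply mem_B_of_P
    refine ⟨?_, ?_, ?_, ?_, ?_, ?_, ?_, ?_⟩ <;>
      simp only [Pi.sub_apply, coeffL_sub, IntAct, g1, Matrix.det_fin_three, det3,
        v6_0, v6_1, v6_2, v6_3, v6_4, v6_5, v3_0, v3_1, v3_2,
        D_C, D_CT1, D_zero, D_one, mul_zero, zero_mul, mul_one, one_mul,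
        add_zero, zero_add, sub_zero, zero_sub, neg_zero, mul_add, mul_sub,
        mul_assoc, mul_smul_comm, smul_mul_assoc, mul_T_assoc, smul_zero,
        coeffL_add, coeffL_neg, coeffL_smul, coeffL_C_mul, coeffL_T_mul,
        coeffL_mul_T, coeffL_T, coeffL_C, coeffL_zero, coeffL_one] <;>
      norm_num
    · first
        | linear_combination coeffL (z 3) (-1) * hinv
        | linear_combination -(coeffL (z 3) (-1) * hinv)
    · first
        | linear_combination -f2
        | linear_combination -(-f2)
    · first
        | linear_combination -f3
        | linear_combination -(-f3)
    · first
        | linear_combination -f4 - coeffL (z 3) (-1) * hinv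
        | linear_combination -(-f4 - coeffL (z 3) (-1) * hinv)
    · first
        | linear_combination -f5
        | linear_combination -(-f5)
    · first
        | linear_combination (-1/2 : ℂ) * f6
        | linear_combination -((-1/2 : ℂ) * f6)
    · first
        | linear_combination -f7
        | linear_combination -(-f7)

end Pf

/-- For `(k₁, k₂, k₃) = (2, 2, 1)` there exist exactly two up to isomorphism
𝔰′-even-homogeneous non-split supermanifolds, corresponding to the classes of
`w₁ = (x⁻¹, 0, 0, 0, 0, (1/2)x⁻²)` and `w₂ = (0, 0, 0, −x⁻¹, x⁻², 0)`. -/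
theorem stmt_16 (w1 w2 : V)
    (hw1 : w1 = ![T (-1), 0, 0, 0, 0, (1 / 2 : ℂ) • T (-2)])
    (hw2 : w2 = ![0, 0, 0, -T (-1), T (-2), 0]) :
    (E'op w1 ∈ B 2 2 1 ∧ F'op 2 2 1 w1 ∈ B 2 2 1 ∧
     E'op w2 ∈ B 2 2 1 ∧ F'op 2 2 1 w2 ∈ B 2 2 1) ∧
    (w1 ∉ B 2 2 1 ∧ w2 ∉ B 2 2 1) ∧
    (¬∃ g : GElt ![2, 2, 1], IntAct g w1 - w2 ∈ B 2 2 1) ∧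
    (∀ z : V, E'op z ∈ B 2 2 1 → F'op 2 2 1 z ∈ B 2 2 1 → z ∉ B 2 2 1 →
      ∃ g : GElt ![2, 2, 1],
        IntAct g w1 - z ∈ B 2 2 1 ∨ IntAct g w2 - z ∈ B 2 2 1) := by
  subst hw1
  subst hw2
  refine ⟨⟨Pf.memE'w1, Pf.memF'w1, Pf.memE'w2, Pf.memF'w2⟩, ⟨Pf.nmem_w1, Pf.nmem_w2⟩, ?_, ?_⟩
  · rintro ⟨g, hg⟩
    exact Pf.no_iso g hg
  · intro z hE hF hz
    exact Pf.classify z hE hF hz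
end
end
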